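/- Let C ⊆ ℤ² be a maximal configuration on the infinite grid, and suppose the building density D(C) = lim_{n→∞} |C ∩ ([-n,n]×[-n,n])| / (2n+1)² exists and equals d. Then 1/2 ≤ d ≤ 3/4. -/

import Mathlib

/-- A house at `p ∈ ℤ²` is blocked if its eastern, western and southern
neighbours are all occupied (rows increase towards the south). -/
def BlockedZ (C : Set (ℤ × ℤ)) (p : ℤ × ℤ) : Prop :=
  (p.1, p.2 + 1) ∈ C ∧ (p.1, p.2 - 1) ∈ C ∧ (p.1 + 1, p.2) ∈ C

/-- A configuration on ℤ² is permissible if no house in it is blocked. -/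
def PermissibleZ (C : Set (ℤ × ℤ)) : Prop := ∀ p ∈ C, ¬ BlockedZ C p

/-- A configuration on ℤ² is maximal if it is permissible and no permissible
configuration strictly contains it. -/
def MaximalZ (C : Set (ℤ × ℤ)) : Prop :=
  PermissibleZ C ∧ ∀ D : Set (ℤ × ℤ), PermissibleZ D → C ⊆ D → D = C

namespace DensityAux

attribute [local instance] Classical.propDecidable

variable {C : Set (ℤ × ℤ)}

/-- Consequence of maximality at an empty cell. -/
lemma empty_cases (hC : MaximalZ C) {p : ℤ × ℤ} (hp : p ∉ C) :
    ((p.1, p.2+1) ∈ C ∧ (p.1, p.2-1) ∈ C ∧ (p.1+1, p.2) ∈ C) ∨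
    ((p.1, p.2-1) ∈ C ∧ (p.1, p.2-2) ∈ C ∧ (p.1+1, p.2-1) ∈ C) ∨
    ((p.1, p.2+1) ∈ C ∧ (p.1, p.2+2) ∈ C ∧ (p.1+1, p.2+1) ∈ C) ∨
    ((p.1-1, p.2) ∈ C ∧ (p.1-1, p.2+1) ∈ C ∧ (p.1-1, p.2-1) ∈ C) := by
  obtain ⟨i, j⟩ := p
  simp only at hp ⊢
  have hni : ¬ PermissibleZ (insert (i, j) C) := by
    intro h
    have := hC.2 _ h (Set.subset_insert _ _)
    exact hp (this ▸ Set.mem_insert (i, j) C)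
  rw [PermissibleZ] at hni
  push_neg at hni
  obtain ⟨q, hq, h1, h2, h3⟩ := hni
  obtain ⟨a, b⟩ := q
  simp only at h1 h2 h3
  rcases Set.mem_insert_iff.1 hq with hqp | hqC
  · -- q = p : case 1
    rw [Prod.mk.injEq] at hqp
    obtain ⟨ha, hb⟩ := hqp
    subst ha; subst hb
    left
    refine ⟨?_, ?_, ?_⟩
    · rcases Set.mem_insert_iff.1 h1 with h | h
      · rw [Prod.mk.injEq] at h; omega
      · exact h
    · rcases Set.mem_insert_iff.1 h2 with h | h
      · rw [Prod.mk.injEq] at h; omega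
      · exact h
    · rcases Set.mem_insert_iff.1 h3 with h | h
      · rw [Prod.mk.injEq] at h; omega
      · exact h
  · have hnb := hC.1 _ hqC
    rw [BlockedZ] at hnb
    simp only at hnb
    rcases Set.mem_insert_iff.1 h1 with e1 | m1
    · -- q = W p : case 2
      rw [Prod.mk.injEq] at e1
      obtain ⟨ha, hb⟩ := e1
      right; left
      refine ⟨?_, ?_, ?_⟩
      · have e : ((i : ℤ), j - 1) = ((a : ℤ), b) := by rw [Prod.mk.injEq]; constructor <;> omega
        rw [e]; exact hqC
      · rcases Set.mem_insert_iff.1 h2 with h | h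
        · rw [Prod.mk.injEq] at h; omega
        · have e : ((i : ℤ), j - 2) = ((a : ℤ), b - 1) := by rw [Prod.mk.injEq]; constructor <;> omega
          rw [e]; exact h
      · rcases Set.mem_insert_iff.1 h3 with h | h
        · rw [Prod.mk.injEq] at h; omega
        · have e : ((i : ℤ) + 1, j - 1) = ((a : ℤ) + 1, b) := by rw [Prod.mk.injEq]; constructor <;> omega
          rw [e]; exact h
    rcases Set.mem_insert_iff.1 h2 with e2 | m2
    · -- q = E p : case 3
      rw [Prod.mk.injEq] at e2
      obtain ⟨ha, hb⟩ := e2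
      right; right; left
      refine ⟨?_, ?_, ?_⟩
      · have e : ((i : ℤ), j + 1) = ((a : ℤ), b) := by rw [Prod.mk.injEq]; constructor <;> omega
        rw [e]; exact hqC
      · have e : ((i : ℤ), j + 2) = ((a : ℤ), b + 1) := by rw [Prod.mk.injEq]; constructor <;> omega
        rw [e]; exact m1
      · rcases Set.mem_insert_iff.1 h3 with h | h
        · rw [Prod.mk.injEq] at h; omega
        · have e : ((i : ℤ) + 1, j + 1) = ((a : ℤ) + 1, b) := by rw [Prod.mk.injEq]; constructor <;> omega
          rw [e]; exact h
    rcases Set.mem_insert_iff.1 h3 with e3 | m3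
    · -- q = N p : case 4
      rw [Prod.mk.injEq] at e3
      obtain ⟨ha, hb⟩ := e3
      right; right; right
      refine ⟨?_, ?_, ?_⟩
      · have e : ((i : ℤ) - 1, j) = ((a : ℤ), b) := by rw [Prod.mk.injEq]; constructor <;> omega
        rw [e]; exact hqC
      · have e : ((i : ℤ) - 1, j + 1) = ((a : ℤ), b + 1) := by rw [Prod.mk.injEq]; constructor <;> omega
        rw [e]; exact m1
      · have e : ((i : ℤ) - 1, j - 1) = ((a : ℤ), b - 1) := by rw [Prod.mk.injEq]; constructor <;> omega
        rw [e]; exact m2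
    · exact absurd ⟨m1, m2, m3⟩ hnb


noncomputable def sq (n : ℕ) : Finset (ℤ × ℤ) := Finset.Icc (-(n : ℤ)) n ×ˢ Finset.Icc (-(n : ℤ)) n

lemma mem_sq {n : ℕ} {p : ℤ × ℤ} :
    p ∈ sq n ↔ -(n : ℤ) ≤ p.1 ∧ p.1 ≤ n ∧ -(n : ℤ) ≤ p.2 ∧ p.2 ≤ n := by
  simp [sq, Finset.mem_product, Finset.mem_Icc]; tauto

lemma card_sq (n : ℕ) : (sq n).card = (2 * n + 1) ^ 2 := by
  rw [sq, Finset.card_product, Int.card_Icc]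
  have : ((n : ℤ) + 1 - -(n : ℤ)).toNat = 2 * n + 1 := by omega
  rw [this]; ring

noncomputable def occ (C : Set (ℤ × ℤ)) (n : ℕ) : Finset (ℤ × ℤ) :=
  (sq n).filter (· ∈ C)
noncomputable def emp (C : Set (ℤ × ℤ)) (n : ℕ) : Finset (ℤ × ℤ) :=
  (sq n).filter (· ∉ C)

lemma occ_add_emp (n : ℕ) : (occ C n).card + (emp C n).card = (2 * n + 1) ^ 2 := by
  rw [occ, emp, Finset.card_filter_add_card_filter_not, card_sq]

/-- The injection from empty cells to occupied cells. -/
noncomputable def phi (C : Set (ℤ × ℤ)) (p : ℤ × ℤ) : ℤ × ℤ :=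
  if (p.1-1, p.2) ∈ C ∧ (p.1-1, p.2+1) ∈ C ∧ (p.1-1, p.2-1) ∈ C then (p.1-1, p.2)
  else if (p.1, p.2-1) ∈ C then (p.1, p.2-1)
  else (p.1, p.2+1)

lemma east_branch (hC : MaximalZ C) {p : ℤ × ℤ} (hp : p ∉ C)
    (h4 : ¬((p.1-1, p.2) ∈ C ∧ (p.1-1, p.2+1) ∈ C ∧ (p.1-1, p.2-1) ∈ C))
    (hW : (p.1, p.2-1) ∉ C) : (p.1, p.2+1) ∈ C ∧ (p.1, p.2+2) ∈ C := by
  rcases empty_cases hC hp with h | h | h | h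
  · exact absurd h.2.1 hW
  · exact absurd h.1 hW
  · exact ⟨h.1, h.2.1⟩
  · exact absurd h h4

lemma phi_mem (hC : MaximalZ C) {p : ℤ × ℤ} (hp : p ∉ C) : phi C p ∈ C := by
  rw [phi]
  split_ifs with h4 hW
  · exact h4.1
  · exact hW
  · exact (east_branch hC hp h4 hW).1

lemma phi_char (p : ℤ × ℤ) :
    ((p.1-1, p.2) ∈ C ∧ (p.1-1, p.2+1) ∈ C ∧ (p.1-1, p.2-1) ∈ C) ∧ phi C p = (p.1-1, p.2) ∨
    (¬((p.1-1, p.2) ∈ C ∧ (p.1-1, p.2+1) ∈ C ∧ (p.1-1, p.2-1) ∈ C) ∧ (p.1, p.2-1) ∈ C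
       ∧ phi C p = (p.1, p.2-1)) ∨
    (¬((p.1-1, p.2) ∈ C ∧ (p.1-1, p.2+1) ∈ C ∧ (p.1-1, p.2-1) ∈ C) ∧ (p.1, p.2-1) ∉ C
       ∧ phi C p = (p.1, p.2+1)) := by
  rw [phi]
  by_cases h4 : (p.1-1, p.2) ∈ C ∧ (p.1-1, p.2+1) ∈ C ∧ (p.1-1, p.2-1) ∈ C
  · left; exact ⟨h4, if_pos h4⟩
  · by_cases hW : (p.1, p.2-1) ∈ C
    · right; left; exact ⟨h4, hW, by rw [if_neg h4, if_pos hW]⟩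
    · right; right; exact ⟨h4, hW, by rw [if_neg h4, if_neg hW]⟩

lemma phi_inj (hC : MaximalZ C) {p q : ℤ × ℤ} (hp : p ∉ C) (hq : q ∉ C)
    (h : phi C p = phi C q) : p = q := by
  rcases phi_char (C := C) p with ⟨c4p, ep⟩ | ⟨c4p, cWp, ep⟩ | ⟨c4p, cWp, ep⟩ <;>
    rcases phi_char (C := C) q with ⟨c4q, eq'⟩ | ⟨c4q, cWq, eq'⟩ | ⟨c4q, cWq, eq'⟩ <;>
    rw [ep, eq', Prod.mk.injEq] at h
  · -- N N
    rw [Prod.ext_iff]; constructor <;> omega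
  · -- N, W : q = NE p ∈ C
    exfalso
    have e : q = (p.1 - 1, p.2 + 1) := by rw [Prod.ext_iff]; constructor <;> omega
    rw [e] at hq
    exact hq c4p.2.1
  · -- N, E : q = NW p ∈ C
    exfalso
    have e : q = (p.1 - 1, p.2 - 1) := by rw [Prod.ext_iff]; constructor <;> omega
    rw [e] at hq
    exact hq c4p.2.2
  · -- W, N : p = NE q
    exfalso
    have e : p = (q.1 - 1, q.2 + 1) := by rw [Prod.ext_iff]; constructor <;> omega
    rw [e] at hp
    exact hp c4q.2.1
  · -- W W
    rw [Prod.ext_iff]; constructor <;> omega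
  · -- W, E : east-branch for q gives (q.1, q.2+2) = p ∈ C
    exfalso
    have hq2 := (east_branch hC hq c4q cWq).2
    have e : (q.1, q.2 + 2) = p := by rw [Prod.ext_iff]; constructor <;> omega
    rw [e] at hq2
    exact hp hq2
  · -- E, N
    exfalso
    have e : p = (q.1 - 1, q.2 - 1) := by rw [Prod.ext_iff]; constructor <;> omega
    rw [e] at hp
    exact hp c4q.2.2
  · -- E, W
    exfalso
    have hp2 := (east_branch hC hp c4p cWp).2
    have e : (p.1, p.2 + 2) = q := by rw [Prod.ext_iff]; constructor <;> omega
    rw [e] at hp2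
    exact hq hp2
  · -- E E
    rw [Prod.ext_iff]; constructor <;> omega

/-- The map from occupied cells to empty cells. -/
noncomputable def psi (C : Set (ℤ × ℤ)) (q : ℤ × ℤ) : ℤ × ℤ :=
  if (q.1, q.2-1) ∉ C then (q.1, q.2-1)
  else if (q.1, q.2+1) ∉ C then (q.1, q.2+1)
  else (q.1+1, q.2)

lemma psi_not_mem (hC : MaximalZ C) {q : ℤ × ℤ} (hq : q ∈ C) : psi C q ∉ C := by
  rw [psi]
  by_cases hW : (q.1, q.2-1) ∉ C
  · rw [if_pos hW]; exact hW
  · rw [if_neg hW]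
    by_cases hE : (q.1, q.2+1) ∉ C
    · rw [if_pos hE]; exact hE
    · rw [if_neg hE]
      push_neg at hW hE
      intro hS
      exact hC.1 q hq ⟨hE, hW, hS⟩

lemma phi_spec (p : ℤ × ℤ) :
    phi C p = (p.1-1, p.2) ∨ phi C p = (p.1, p.2-1) ∨ phi C p = (p.1, p.2+1) := by
  rw [phi]; split_ifs <;>
    first | (left; rfl) | (right; left; rfl) | (right; right; rfl)

lemma psi_spec (q : ℤ × ℤ) :
    psi C q = (q.1, q.2-1) ∨ psi C q = (q.1, q.2+1) ∨ psi C q = (q.1+1, q.2) := by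
  rw [psi]; split_ifs <;>
    first | (left; rfl) | (right; left; rfl) | (right; right; rfl)

lemma lower_card (hC : MaximalZ C) (n : ℕ) : (emp C n).card ≤ (occ C (n + 1)).card := by
  apply Finset.card_le_card_of_injOn (phi C)
  · intro p hp
    rw [emp, Finset.mem_coe, Finset.mem_filter] at hp
    obtain ⟨hps, hpC⟩ := hp
    rw [mem_sq] at hps
    rw [Finset.mem_coe, occ, Finset.mem_filter]
    refine ⟨?_, phi_mem hC hpC⟩
    rcases phi_spec (C := C) p with h | h | h <;> rw [h] <;> rw [mem_sq] <;>
      simp only [Nat.cast_add, Nat.cast_one] <;>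
      refine ⟨by omega, by omega, by omega, by omega⟩
  · intro p hp q hq h
    rw [emp, Finset.mem_coe, Finset.mem_filter] at hp hq
    exact phi_inj hC hp.2 hq.2 h

lemma upper_card (hC : MaximalZ C) (n : ℕ) :
    (occ C n).card ≤ 3 * (emp C (n + 1)).card := by
  apply Finset.card_le_mul_card_image_of_maps_to (f := psi C)
  · intro q hq
    rw [occ, Finset.mem_filter] at hq
    obtain ⟨hqs, hqC⟩ := hq
    rw [mem_sq] at hqs
    rw [emp, Finset.mem_filter]
    refine ⟨?_, psi_not_mem hC hqC⟩
    rcases psi_spec (C := C) q with h | h | h <;> rw [h] <;> rw [mem_sq] <;>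
      simp only [Nat.cast_add, Nat.cast_one] <;>
      refine ⟨by omega, by omega, by omega, by omega⟩
  · intro b _
    have hsub : (occ C n).filter (fun q => psi C q = b) ⊆
        {(b.1, b.2 + 1), (b.1, b.2 - 1), (b.1 - 1, b.2)} := by
      intro q hq
      rw [Finset.mem_filter] at hq
      obtain ⟨-, hb⟩ := hq
      simp only [Finset.mem_insert, Finset.mem_singleton]
      rcases psi_spec (C := C) q with h | h | h <;> rw [h, Prod.ext_iff] at hb <;>
        obtain ⟨h1, h2⟩ := hb
      · left; rw [Prod.ext_iff]; constructor <;> simp <;> omega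
      · right; left; rw [Prod.ext_iff]; constructor <;> simp <;> omega
      · right; right; rw [Prod.ext_iff]; constructor <;> simp <;> omega
    calc ((occ C n).filter (fun q => psi C q = b)).card
        ≤ ({(b.1, b.2 + 1), (b.1, b.2 - 1), (b.1 - 1, b.2)} : Finset (ℤ × ℤ)).card :=
          Finset.card_le_card hsub
      _ ≤ 3 := by
          apply (Finset.card_insert_le _ _).trans
          apply Nat.succ_le_succ
          apply (Finset.card_insert_le _ _).trans
          simp

open Filter in
lemma analytic (a : ℕ → ℕ) (d : ℝ)
    (hd : Tendsto (fun n : ℕ => (a n : ℝ) / (2 * (n : ℝ) + 1) ^ 2) atTop (nhds d))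
    (hL : ∀ n : ℕ, (2 * n + 1) ^ 2 ≤ a n + a (n + 1))
    (hU : ∀ n : ℕ, a n + 3 * a (n + 1) ≤ 3 * (2 * n + 3) ^ 2) :
    1 / 2 ≤ d ∧ d ≤ 3 / 4 := by
  have hpos : ∀ n : ℕ, (0 : ℝ) < (2 * (n : ℝ) + 1) ^ 2 := by
    intro n; positivity
  have hpos3 : ∀ n : ℕ, (0 : ℝ) < (2 * (n : ℝ) + 3) ^ 2 := by
    intro n; positivity
  -- g n → 1
  have hdenom : Tendsto (fun n : ℕ => 2 * (n : ℝ) + 1) atTop atTop := by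
    apply tendsto_atTop_add_const_right
    exact (tendsto_natCast_atTop_atTop (R := ℝ)).const_mul_atTop (by norm_num)
  have hg0 : Tendsto (fun n : ℕ => (2 * (n : ℝ) + 3) / (2 * (n : ℝ) + 1)) atTop (nhds 1) := by
    have h0 : Tendsto (fun n : ℕ => (2 : ℝ) / (2 * (n : ℝ) + 1)) atTop (nhds 0) :=
      Tendsto.div_atTop tendsto_const_nhds hdenom
    have := h0.const_add (1 : ℝ)
    simp only [add_zero] at this
    convert this using 2 with n
    have h1 : (2 * (n : ℝ) + 1) ≠ 0 := by positivity
    field_simp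
    ring
  have hg : Tendsto (fun n : ℕ => ((2 * (n : ℝ) + 3) / (2 * (n : ℝ) + 1)) ^ 2)
      atTop (nhds 1) := by
    have := hg0.pow 2
    simpa using this
  -- a (n+1) / (2n+1)^2 → d
  have hshift : Tendsto (fun n : ℕ => (a (n + 1) : ℝ) / (2 * (n : ℝ) + 3) ^ 2)
      atTop (nhds d) := by
    have := hd.comp (tendsto_add_atTop_nat 1)
    convert this using 2 with n
    simp only [Function.comp_apply]
    push_cast
    ring_nf
  have h2 : Tendsto (fun n : ℕ => (a (n + 1) : ℝ) / (2 * (n : ℝ) + 1) ^ 2)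
      atTop (nhds d) := by
    have hmul := hshift.mul hg
    rw [mul_one] at hmul
    convert hmul using 2 with n
    have h1 : (2 * (n : ℝ) + 1) ≠ 0 := by positivity
    have h3 : (2 * (n : ℝ) + 3) ≠ 0 := by positivity
    field_simp
  constructor
  · -- lower bound
    have hle : ∀ n : ℕ, 1 - (a n : ℝ) / (2 * (n : ℝ) + 1) ^ 2
        ≤ (a (n + 1) : ℝ) / (2 * (n : ℝ) + 1) ^ 2 := by
      intro n
      have hcast : (2 * (n : ℝ) + 1) ^ 2 ≤ (a n : ℝ) + (a (n + 1) : ℝ) := by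
        exact_mod_cast hL n
      rw [sub_le_iff_le_add, ← add_div, le_div_iff₀ (hpos n), one_mul]
      linarith
    have hlim : Tendsto (fun n : ℕ => 1 - (a n : ℝ) / (2 * (n : ℝ) + 1) ^ 2)
        atTop (nhds (1 - d)) := tendsto_const_nhds.sub hd
    have := le_of_tendsto_of_tendsto' hlim h2 hle
    linarith
  · -- upper bound
    have hle : ∀ n : ℕ, (a n : ℝ) / (2 * (n : ℝ) + 1) ^ 2
        ≤ 3 * (((2 * (n : ℝ) + 3) / (2 * (n : ℝ) + 1)) ^ 2
            - (a (n + 1) : ℝ) / (2 * (n : ℝ) + 1) ^ 2) := by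
      intro n
      have hcast : (a n : ℝ) + 3 * (a (n + 1) : ℝ) ≤ 3 * (2 * (n : ℝ) + 3) ^ 2 := by
        exact_mod_cast hU n
      rw [div_pow, div_sub_div_same, ← mul_div_assoc, div_le_div_iff₀ (hpos n) (hpos n)]
      have hx : (a n : ℝ) ≤ 3 * ((2 * (n : ℝ) + 3) ^ 2 - (a (n + 1) : ℝ)) := by linarith
      exact mul_le_mul_of_nonneg_right hx (hpos n).le
    have hlim : Tendsto (fun n : ℕ => 3 * (((2 * (n : ℝ) + 3) / (2 * (n : ℝ) + 1)) ^ 2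
        - (a (n + 1) : ℝ) / (2 * (n : ℝ) + 1) ^ 2)) atTop (nhds (3 * (1 - d))) :=
      (hg.sub h2).const_mul 3
    have := le_of_tendsto_of_tendsto' hd hlim hle
    linarith

end DensityAux

/-- If a maximal configuration on ℤ² has a building density d (the limit of
|C ∩ [-n,n]²|/(2n+1)² as n → ∞), then 1/2 ≤ d ≤ 3/4. -/
theorem density_bounds (C : Set (ℤ × ℤ)) (hC : MaximalZ C) (d : ℝ)
    (hd : Filter.Tendsto
      (fun n : ℕ =>
        ((C ∩ (Set.Icc (-(n : ℤ)) (n : ℤ) ×ˢ Set.Icc (-(n : ℤ)) (n : ℤ))).ncard : ℝ) /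
          (2 * (n : ℝ) + 1) ^ 2)
      Filter.atTop (nhds d)) :
    1 / 2 ≤ d ∧ d ≤ 3 / 4 := by

  classical
  have hbridge : ∀ n : ℕ,
      (C ∩ (Set.Icc (-(n : ℤ)) (n : ℤ) ×ˢ Set.Icc (-(n : ℤ)) (n : ℤ))).ncard
        = (DensityAux.occ C n).card := by
    intro n
    have hset : C ∩ (Set.Icc (-(n : ℤ)) (n : ℤ) ×ˢ Set.Icc (-(n : ℤ)) (n : ℤ))
        = ↑(DensityAux.occ C n) := by
      ext p
      simp only [DensityAux.occ, DensityAux.sq, Finset.coe_filter, Set.mem_setOf_eq,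
        Finset.mem_product, Finset.mem_Icc, Set.mem_inter_iff, Set.mem_prod, Set.mem_Icc]
      tauto
    rw [hset, Set.ncard_coe_finset]
  simp only [hbridge] at hd
  apply DensityAux.analytic (fun n => (DensityAux.occ C n).card) d hd
  · -- lower inequality
    intro n
    have h1 := DensityAux.occ_add_emp (C := C) n
    have h2 := DensityAux.lower_card hC n
    omega
  · -- upper inequality
    intro n
    have h1 := DensityAux.occ_add_emp (C := C) (n + 1)
    have h2 := DensityAux.upper_card hC n
    have h3 : (2 * (n + 1) + 1) ^ 2 = (2 * n + 3) ^ 2 := by ring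
    rw [h3] at h1
    set K := (2 * n + 3) ^ 2 with hK
    omega
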